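/- Let A be a k×k real matrix with a Jordan form A = Z⁻¹·diag(J(λ_1,k_1),…,J(λ_p,k_p))·Z in which every eigenvalue λ_i lies in [−1,1] and every block size k_i is at most m. Then for every n ≥ 1, ‖T_n(A)‖₁ ≤ 3·‖Z⁻¹‖₁·‖Z‖₁·n^{2m−2}. -/

import Mathlib

/-- The `n`-th Chebyshev polynomial of the first kind, as a real polynomial. -/
noncomputable def chebT (n : ℕ) : Polynomial ℝ := Polynomial.Chebyshev.T ℝ n

/-- The `n`-th Chebyshev coefficient `α_n[f] = (2/π)·∫_{−1}^{1} f(t)·T_n(t)/√(1−t²) dt`. -/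
noncomputable def chebCoeff (f : ℝ → ℝ) (n : ℕ) : ℝ :=
  (2 / Real.pi) * ∫ t in (-1:ℝ)..1, f t * (chebT n).eval t / Real.sqrt (1 - t ^ 2)

/-- `f` satisfies condition BV(r) on `[−1,1]`: `f ∈ C^{r−1}([−1,1])` and `f^{(r−1)}` is
absolutely continuous with derivative `g = f^{(r)}` of bounded variation. -/
def BVCond (f : ℝ → ℝ) (r : ℕ) : Prop :=
  1 ≤ r ∧ ContDiffOn ℝ (r - 1 : ℕ) f (Set.Icc (-1 : ℝ) 1) ∧
  ∃ g : ℝ → ℝ, BoundedVariationOn g (Set.Icc (-1:ℝ) 1) ∧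
    ∀ x ∈ Set.Icc (-1:ℝ) 1,
      iteratedDerivWithin (r - 1) f (Set.Icc (-1:ℝ) 1) x =
        iteratedDerivWithin (r - 1) f (Set.Icc (-1:ℝ) 1) (-1) + ∫ t in (-1:ℝ)..x, g t

/-- Frobenius norm of a real square matrix. -/
noncomputable def frobNorm {k : ℕ} (X : Matrix (Fin k) (Fin k) ℝ) : ℝ :=
  Real.sqrt (∑ i, ∑ j, (X i j) ^ 2)

/-- Maximum absolute row-sum norm of a real square matrix. -/
noncomputable def rowSumNorm {k : ℕ} (X : Matrix (Fin k) (Fin k) ℝ) : ℝ :=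
  ⨆ i, ∑ j, |X i j|

/-- The `k × k` Jordan block with eigenvalue `lam`. -/
def jordanBlock (lam : ℝ) (k : ℕ) : Matrix (Fin k) (Fin k) ℝ :=
  fun i j => if (j : ℕ) = (i : ℕ) then lam else if (j : ℕ) = (i : ℕ) + 1 then 1 else 0

open Polynomial Polynomial.Chebyshev

noncomputable def chebCone : AddSubmonoid (Polynomial ℝ) :=
  AddSubmonoid.closure {q | ∃ (a : ℝ) (j : ℕ), 0 ≤ a ∧ q = Polynomial.C a * T ℝ j}

lemma gen_mem {a : ℝ} (ha : 0 ≤ a) (j : ℕ) : Polynomial.C a * T ℝ j ∈ chebCone :=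
  AddSubmonoid.subset_closure ⟨a, j, ha, rfl⟩

lemma T_mem (j : ℕ) : T ℝ j ∈ chebCone := by
  simpa using gen_mem (by norm_num : (0:ℝ) ≤ 1) j

lemma smul_mem {a : ℝ} (ha : 0 ≤ a) {q : Polynomial ℝ} (hq : q ∈ chebCone) :
    Polynomial.C a * q ∈ chebCone := by
  induction hq using AddSubmonoid.closure_induction with
  | mem x hx =>
      obtain ⟨b, j, hb, rfl⟩ := hx
      rw [← mul_assoc, ← Polynomial.C_mul]
      exact gen_mem (mul_nonneg ha hb) j
  | zero => simpa using zero_mem chebCone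
  | add x y hx hy ihx ihy => rw [mul_add]; exact add_mem ihx ihy

lemma U_succ_succ (j : ℤ) : U ℝ (j + 2) = 2 * T ℝ (j + 2) + U ℝ j := by
  have h1 := U_eq_X_mul_U_add_T ℝ (j + 1)
  have h2 := U_add_two ℝ j
  rw [show (j:ℤ) + 1 + 1 = j + 2 by ring] at h1
  linear_combination 2 * h1 - h2

lemma two_T_mem (j : ℕ) : 2 * T ℝ j ∈ chebCone := by
  rw [show (2 : Polynomial ℝ) = Polynomial.C (2:ℝ) from (map_ofNat Polynomial.C 2).symm]
  exact gen_mem (by norm_num) j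

lemma U_mem : ∀ j : ℕ, U ℝ j ∈ chebCone := by
  intro j
  induction j using Nat.strong_induction_on with
  | _ j ih =>
    match j with
    | 0 => simpa [U_zero] using T_mem 0
    | 1 =>
        have h : U ℝ 1 = Polynomial.C (2:ℝ) * T ℝ 1 := by
          rw [U_one, T_one, show (2 : Polynomial ℝ) = Polynomial.C (2:ℝ) from (map_ofNat Polynomial.C 2).symm]
        rw [show ((1:ℕ):ℤ) = 1 by norm_num, h]
        exact gen_mem (by norm_num) 1
    | (j+2) =>
        have h : ((j + 2 : ℕ) : ℤ) = (j : ℤ) + 2 := by push_cast; ring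
        rw [h, U_succ_succ]
        refine add_mem ?_ (ih j (by omega))
        have h2 : ((j:ℤ) + 2) = ((j + 2 : ℕ) : ℤ) := by push_cast; ring
        rw [h2]
        exact two_T_mem (j+2)

lemma T_eval_one (j : ℤ) : (T ℝ j).eval 1 = 1 := by
  have := Polynomial.Chebyshev.T_real_cos 0 j
  simpa using this

lemma abs_T_eval_le (j : ℤ) {x : ℝ} (hx : x ∈ Set.Icc (-1:ℝ) 1) : |(T ℝ j).eval x| ≤ 1 := by
  obtain ⟨h1, h2⟩ := hx
  have hx' : x = Real.cos (Real.arccos x) := (Real.cos_arccos h1 h2).symm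
  rw [hx', Polynomial.Chebyshev.T_real_cos]
  exact Real.abs_cos_le_one _

lemma cone_eval_le {q : Polynomial ℝ} (hq : q ∈ chebCone) {x : ℝ}
    (hx : x ∈ Set.Icc (-1:ℝ) 1) : |q.eval x| ≤ q.eval 1 := by
  induction hq using AddSubmonoid.closure_induction with
  | mem y hy =>
      obtain ⟨a, j, ha, rfl⟩ := hy
      simp only [Polynomial.eval_mul, Polynomial.eval_C, _root_.T_eval_one, mul_one, abs_mul,
        abs_of_nonneg ha]
      exact mul_le_of_le_one_right ha (abs_T_eval_le _ hx)
  | zero => simp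
  | add y z hy hz ihy ihz =>
      calc |(y + z).eval x| ≤ |y.eval x| + |z.eval x| := by
            rw [Polynomial.eval_add]; exact abs_add_le _ _
        _ ≤ (y + z).eval 1 := by rw [Polynomial.eval_add]; exact add_le_add ihy ihz

lemma cone_eval_one_nonneg {q : Polynomial ℝ} (hq : q ∈ chebCone) : 0 ≤ q.eval 1 :=
  le_trans (abs_nonneg _) (cone_eval_le hq ⟨by norm_num, le_refl 1⟩)

lemma deriv_mem {q : Polynomial ℝ} (hq : q ∈ chebCone) : derivative q ∈ chebCone := by
  induction hq using AddSubmonoid.closure_induction with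
  | mem y hy =>
      obtain ⟨a, j, ha, rfl⟩ := hy
      rw [derivative_mul, derivative_C, zero_mul, zero_add, T_derivative_eq_U]
      match j with
      | 0 => simpa using zero_mem chebCone
      | (j+1) =>
          have h1 : ((j+1:ℕ):ℤ) - 1 = (j:ℤ) := by push_cast; ring
          have h2 : (((j+1:ℕ):ℤ) : Polynomial ℝ) = Polynomial.C ((j:ℝ)+1) := by
            push_cast; simp
          rw [h1, h2, ← mul_assoc, ← Polynomial.C_mul]
          exact smul_mem (by positivity) (U_mem j)
  | zero => simpa using zero_mem chebCone
  | add y z hy hz ihy ihz => rw [derivative_add]; exact add_mem ihy ihz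

lemma iter_deriv_mem (n : ℕ) : ∀ j : ℕ, derivative^[j] (T ℝ n) ∈ chebCone := by
  intro j
  induction j with
  | zero => exact T_mem n
  | succ j ih => rw [Function.iterate_succ_apply']; exact deriv_mem ih


open Polynomial Polynomial.Chebyshev

lemma cheb_ode (n : ℤ) :
    (1 - X^2) * derivative (derivative (T ℝ n)) =
      X * derivative (T ℝ n) - ((n:Polynomial ℝ))^2 * T ℝ n := by
  have h1 := T_derivative_eq_U (R := ℝ) n
  have h2 := congr_arg derivative h1
  simp only [derivative_mul, derivative_intCast, zero_mul, zero_add] at h2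
  have h3 := add_one_mul_T_eq_poly_in_U (R := ℝ) (n - 1)
  rw [sub_add_cancel] at h3
  linear_combination (norm := (push_cast; ring_nf))
    (1 - X^2) * h2 - X * h1 + (n : Polynomial ℝ) * h3

lemma cheb_ode_iter (n : ℤ) (j : ℕ) :
    (1 - X^2) * derivative (derivative (derivative^[j] (T ℝ n))) =
      ((2*j+1 : ℕ) : Polynomial ℝ) * X * derivative (derivative^[j] (T ℝ n))
        + ((j:Polynomial ℝ)^2 - (n:Polynomial ℝ)^2) * derivative^[j] (T ℝ n) := by
  induction j with
  | zero =>
      simpa using by linear_combination cheb_ode n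
  | succ j ih =>
      have h := congr_arg derivative ih
      simp only [derivative_mul, derivative_add, derivative_sub, derivative_one,
        derivative_X_pow, derivative_X, derivative_natCast, derivative_intCast,
        map_ofNat, derivative_pow, zero_mul, mul_zero, zero_add, add_zero, mul_one,
        sub_zero, zero_sub, pow_one, Polynomial.C_eq_natCast] at h
      simp only [Function.iterate_succ_apply', Nat.succ_eq_add_one]
      push_cast
      push_cast at h
      linear_combination (norm := ring_nf) h

open Polynomial Polynomial.Chebyshev

noncomputable def chebA (n : ℤ) (j : ℕ) : ℝ := (derivative^[j] (T ℝ n)).eval 1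

lemma chebA_zero (n : ℤ) : chebA n 0 = 1 := by
  simp [chebA, _root_.T_eval_one]

lemma chebA_rec (n : ℤ) (j : ℕ) :
    ((2*j+1 : ℕ) : ℝ) * chebA n (j+1) = ((n:ℝ)^2 - (j:ℝ)^2) * chebA n j := by
  have h := congr_arg (Polynomial.eval (1:ℝ)) (cheb_ode_iter n j)
  simp only [Polynomial.eval_mul, Polynomial.eval_add, Polynomial.eval_sub, Polynomial.eval_one,
    Polynomial.eval_pow, Polynomial.eval_X, Polynomial.eval_natCast, Polynomial.eval_intCast] at h
  have h' : (0:ℝ) = ((2*j+1 : ℕ) : ℝ) * chebA n (j+1) + ((j:ℝ)^2 - (n:ℝ)^2) * chebA n j := by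
    simpa [chebA, Function.iterate_succ_apply'] using h
  push_cast at h' ⊢
  linarith

lemma chebA_nonneg (n : ℕ) (j : ℕ) : 0 ≤ chebA n j :=
  cone_eval_one_nonneg (iter_deriv_mem n j)

lemma chebA_le (n : ℕ) (j : ℕ) :
    chebA n j * (2*j).factorial ≤ (n:ℝ)^(2*j) * j.factorial * 2^j := by
  induction j with
  | zero => simp [chebA_zero]
  | succ j ih =>
      have hrec := chebA_rec n j
      have hnn := chebA_nonneg n j
      have hnn' := chebA_nonneg n (j+1)
      have hfac1 : ((2*(j+1)).factorial : ℝ) = (2*j+2) * ((2*j+1) * (2*j).factorial) := by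
        have : 2*(j+1) = (2*j+1) + 1 := by ring
        rw [this, Nat.factorial_succ, Nat.factorial_succ]
        push_cast; ring
      have hfac2 : ((j+1).factorial : ℝ) = (j+1) * j.factorial := by
        rw [Nat.factorial_succ]; push_cast; ring
      -- chebA n (j+1) = ((n²-j²) * chebA n j) / (2j+1)
      have h21 : (0:ℝ) < (2*j+1 : ℕ) := by positivity
      have key : chebA n (j+1) * (2*(j+1)).factorial
          = ((n:ℝ)^2 - (j:ℝ)^2) * chebA n j * (2*j+2) * (2*j).factorial := by
        have := hrec
        push_cast at this
        rw [hfac1]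
        push_cast
        nlinarith [this]
      rw [key]
      have step1 : ((n:ℝ)^2 - (j:ℝ)^2) * chebA n j ≤ (n:ℝ)^2 * chebA n j := by
        nlinarith [sq_nonneg (j:ℝ)]
      have hfn : (0:ℝ) ≤ ((2*j).factorial : ℝ) := by positivity
      calc ((n:ℝ)^2 - (j:ℝ)^2) * chebA n j * (2*j+2) * (2*j).factorial
          ≤ (n:ℝ)^2 * chebA n j * (2*j+2) * (2*j).factorial := by nlinarith
        _ = (n:ℝ)^2 * (2*j+2) * (chebA n j * (2*j).factorial) := by ring
        _ ≤ (n:ℝ)^2 * (2*j+2) * ((n:ℝ)^(2*j) * j.factorial * 2^j) := by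
            have : (0:ℝ) ≤ (n:ℝ)^2 * (2*j+2) := by positivity
            exact mul_le_mul_of_nonneg_left ih this
        _ = (n:ℝ)^(2*(j+1)) * (j+1).factorial * 2^(j+1) := by
            rw [hfac2, pow_succ, show 2*(j+1) = 2*j+2 from by ring, pow_add]
            ring

open Polynomial Polynomial.Chebyshev

lemma hasse_eval (j : ℕ) (q : Polynomial ℝ) (x : ℝ) :
    (j.factorial : ℝ) * (Polynomial.hasseDeriv j q).eval x = (derivative^[j] q).eval x := by
  have h := congr_fun (Polynomial.factorial_smul_hasseDeriv (R := ℝ) j) q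
  simp only [LinearMap.smul_apply] at h
  rw [← h, nsmul_eq_mul, Polynomial.eval_mul, Polynomial.eval_natCast]

lemma coeff_abs_le (n j : ℕ) {x : ℝ} (hx : x ∈ Set.Icc (-1:ℝ) 1) :
    |(Polynomial.taylor x (T ℝ n)).coeff j| ≤ (n:ℝ)^(2*j) * 2^j / (2*j).factorial := by
  rw [Polynomial.taylor_coeff]
  have hj : (0:ℝ) < j.factorial := by positivity
  have h2j : (0:ℝ) < (2*j).factorial := by positivity
  have habs : (j.factorial : ℝ) * |(Polynomial.hasseDeriv j (T ℝ n)).eval x| ≤ chebA n j := by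
    rw [← abs_of_pos hj, ← abs_mul, hasse_eval]
    exact cone_eval_le (iter_deriv_mem n j) hx
  have hA := chebA_le n j
  rw [le_div_iff₀ h2j]
  nlinarith [mul_le_mul_of_nonneg_right habs (le_of_lt h2j), hA, hj,
    abs_nonneg ((Polynomial.hasseDeriv j (T ℝ (n:ℤ))).eval x)]

lemma fact_ge : ∀ m : ℕ, 1 ≤ m → 2^m * 6^(m-1) ≤ (2*m).factorial := by
  intro m hm
  induction m with
  | zero => omega
  | succ m ih =>
      match m, ih with
      | 0, _ => decide
      | (m+1), ih =>
          have h1 := ih (by omega)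
          have h2 : 2*(m+2) = (2*(m+1)+1)+1 := by ring
          rw [h2, Nat.factorial_succ, Nat.factorial_succ]
          have h3 : 2^(m+2) * 6^(m+2-1) = 12 * (2^(m+1) * 6^(m+1-1)) := by
            rw [show m+2-1 = m+1 from rfl, show m+1-1 = m from rfl]
            ring
          calc 2^(m+2) * 6^(m+2-1) = 12 * (2^(m+1) * 6^(m+1-1)) := h3
            _ ≤ 12 * (2*(m+1)).factorial := by omega
            _ ≤ ((2*(m+1)+1)+1) * ((2*(m+1)+1) * (2*(m+1)).factorial) := by
                have : 12 ≤ ((2*(m+1)+1)+1) * (2*(m+1)+1) := by nlinarith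
                calc 12 * (2*(m+1)).factorial ≤ (((2*(m+1)+1)+1) * (2*(m+1)+1)) * (2*(m+1)).factorial := by
                      exact Nat.mul_le_mul_right _ this
                  _ = ((2*(m+1)+1)+1) * ((2*(m+1)+1) * (2*(m+1)).factorial) := by ring

lemma term_le (m : ℕ) (hm : 1 ≤ m) : (2:ℝ)^m / (2*m).factorial ≤ (1/6)^(m-1) := by
  have h := fact_ge m hm
  have h' : (2:ℝ)^m * 6^(m-1) ≤ (2*m).factorial := by exact_mod_cast h
  have h6 : (0:ℝ) < 6^(m-1) := by positivity
  have hf : (0:ℝ) < (2*m).factorial := by positivity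
  rw [div_le_iff₀ hf, one_div, inv_pow, inv_mul_eq_div, le_div_iff₀ h6]
  exact h'

lemma gsum (m : ℕ) : ∑ j ∈ Finset.range m, (2:ℝ)^j / (2*j).factorial ≤ 11/5 := by
  rcases Nat.eq_zero_or_pos m with rfl | hm
  · simp; norm_num
  have key : ∀ m : ℕ, 1 ≤ m →
      ∑ j ∈ Finset.range m, (2:ℝ)^j / (2*j).factorial ≤ 11/5 - (6/5) * (1/6)^(m-1) := by
    intro m hm
    induction m with
    | zero => omega
    | succ m ih =>
        rcases Nat.eq_zero_or_pos m with rfl | hm'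
        · norm_num
        · obtain ⟨m', rfl⟩ : ∃ m', m = m'+1 := ⟨m-1, (Nat.succ_pred_eq_of_pos hm').symm⟩
          have h1 := ih hm'
          rw [Finset.sum_range_succ]
          have h2 := term_le (m'+1) hm'
          have h3 : (6/5 : ℝ) * (1/6)^(m'+1+1-1) = (1/5) * (1/6)^(m'+1-1) := by
            rw [show m'+1+1-1 = m'+1 from rfl, show m'+1-1 = m' from rfl, pow_succ]
            ring
          rw [h3]
          rw [show m'+1-1 = m' from rfl] at h1 h2 ⊢
          linarith
  linarith [key m hm, pow_nonneg (by norm_num : (0:ℝ) ≤ 1/6) (m-1)]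

lemma sum_bound (n m : ℕ) (hn : 1 ≤ n) :
    ∑ j ∈ Finset.range m, (n:ℝ)^(2*j) * 2^j / (2*j).factorial ≤ 3 * (n:ℝ)^(2*m-2) := by
  have hn1 : (1:ℝ) ≤ (n:ℝ) := by exact_mod_cast hn
  have hpow : (0:ℝ) < (n:ℝ)^(2*m-2) := by positivity
  have step : ∑ j ∈ Finset.range m, (n:ℝ)^(2*j) * 2^j / (2*j).factorial
      ≤ ∑ j ∈ Finset.range m, (n:ℝ)^(2*m-2) * ((2:ℝ)^j / (2*j).factorial) := by
    apply Finset.sum_le_sum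
    intro j hj
    rw [Finset.mem_range] at hj
    have hle : (n:ℝ)^(2*j) ≤ (n:ℝ)^(2*m-2) := pow_le_pow_right₀ hn1 (by omega)
    rw [mul_div_assoc]
    apply mul_le_mul_of_nonneg_right hle (by positivity)
  rw [← Finset.mul_sum] at step
  calc ∑ j ∈ Finset.range m, (n:ℝ)^(2*j) * 2^j / (2*j).factorial
      ≤ (n:ℝ)^(2*m-2) * ∑ j ∈ Finset.range m, (2:ℝ)^j / (2*j).factorial := step
    _ ≤ (n:ℝ)^(2*m-2) * (11/5) := by
        exact mul_le_mul_of_nonneg_left (gsum m) (le_of_lt hpow)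
    _ ≤ 3 * (n:ℝ)^(2*m-2) := by nlinarith

lemma rowSumNorm_nonneg {k : ℕ} (X : Matrix (Fin k) (Fin k) ℝ) : 0 ≤ rowSumNorm X :=
  Real.iSup_nonneg fun i => Finset.sum_nonneg fun j _ => abs_nonneg _

lemma row_le_rowSumNorm {k : ℕ} (X : Matrix (Fin k) (Fin k) ℝ) (i : Fin k) :
    ∑ j, |X i j| ≤ rowSumNorm X :=
  le_ciSup (f := fun i => ∑ j, |X i j|) (Set.Finite.bddAbove (Set.finite_range _)) i

lemma rowSumNorm_le {k : ℕ} {X : Matrix (Fin k) (Fin k) ℝ} {C : ℝ} (hC : 0 ≤ C)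
    (h : ∀ i, ∑ j, |X i j| ≤ C) : rowSumNorm X ≤ C :=
  Real.iSup_le h hC

lemma rowSumNorm_mul_le {k : ℕ} (X Y : Matrix (Fin k) (Fin k) ℝ) :
    rowSumNorm (X * Y) ≤ rowSumNorm X * rowSumNorm Y := by
  apply rowSumNorm_le (mul_nonneg (rowSumNorm_nonneg X) (rowSumNorm_nonneg Y))
  intro i
  calc ∑ j, |(X * Y) i j| ≤ ∑ j, ∑ l, |X i l * Y l j| := by
        apply Finset.sum_le_sum
        intro j _
        rw [Matrix.mul_apply]
        exact Finset.abs_sum_le_sum_abs _ _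
    _ = ∑ l, |X i l| * ∑ j, |Y l j| := by
        rw [Finset.sum_comm]
        congr 1; funext l
        rw [Finset.mul_sum]
        congr 1; funext j
        rw [abs_mul]
    _ ≤ ∑ l, |X i l| * rowSumNorm Y := by
        apply Finset.sum_le_sum
        intro l _
        exact mul_le_mul_of_nonneg_left (row_le_rowSumNorm Y l) (abs_nonneg _)
    _ = (∑ l, |X i l|) * rowSumNorm Y := by rw [Finset.sum_mul]
    _ ≤ rowSumNorm X * rowSumNorm Y :=
        mul_le_mul_of_nonneg_right (row_le_rowSumNorm X i) (rowSumNorm_nonneg Y)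

def shiftN (s : ℕ) : Matrix (Fin s) (Fin s) ℝ :=
  fun a b => if (b : ℕ) = (a : ℕ) + 1 then 1 else 0

lemma jordan_decomp (lam : ℝ) (s : ℕ) :
    jordanBlock lam s = lam • (1 : Matrix (Fin s) (Fin s) ℝ) + shiftN s := by
  funext a b
  simp only [jordanBlock, shiftN, Matrix.add_apply, Matrix.smul_apply, Matrix.one_apply,
    smul_eq_mul]
  rcases eq_or_ne ((b:ℕ)) ((a:ℕ)) with h | h
  · have : a = b := Fin.ext h.symm
    simp [this, h]
  · have : ¬ a = b := fun hc => h (by rw [hc])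
    simp [h, this]

lemma shiftN_pow (s : ℕ) (d : ℕ) (a b : Fin s) :
    (shiftN s ^ d) a b = if (b : ℕ) = (a : ℕ) + d then 1 else 0 := by
  induction d generalizing b with
  | zero =>
      rw [pow_zero]
      simp only [Matrix.one_apply, Nat.add_zero]
      rcases eq_or_ne a b with h | h
      · simp [h]
      · have : (b:ℕ) ≠ (a:ℕ) := fun hc => h (Fin.ext hc.symm)
        simp [h, this]
  | succ d ih =>
      rw [pow_succ, Matrix.mul_apply]
      by_cases h : (a:ℕ) + d < s
      · rw [Finset.sum_eq_single (⟨(a:ℕ)+d, h⟩ : Fin s)]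
        · rw [ih ⟨(a:ℕ)+d, h⟩]
          simp only [shiftN]
          simp [Nat.add_assoc]
        · intro l _ hl
          rw [ih l]
          have : (l:ℕ) ≠ (a:ℕ) + d := fun hc => hl (Fin.ext hc)
          simp [this]
        · intro hmem
          exact absurd (Finset.mem_univ _) hmem
      · have hz : ∀ l : Fin s, (shiftN s ^ d) a l * shiftN s l b = 0 := by
          intro l
          rw [ih l]
          have : (l:ℕ) ≠ (a:ℕ) + d := by omega
          simp [this]
        rw [Finset.sum_eq_zero fun l _ => hz l]
        have : (b:ℕ) ≠ (a:ℕ) + (d+1) := by omega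
        simp [this]

lemma aeval_jordan_apply (lam : ℝ) (s : ℕ) (q : Polynomial ℝ) (a b : Fin s) :
    (Polynomial.aeval (jordanBlock lam s) q) a b =
      if (a:ℕ) ≤ (b:ℕ) then (Polynomial.taylor lam q).coeff ((b:ℕ) - (a:ℕ)) else 0 := by
  have hcomp : (Polynomial.taylor lam q).comp (Polynomial.X - Polynomial.C lam) = q := by
    rw [Polynomial.taylor_apply, Polynomial.comp_assoc]
    simp [Polynomial.sub_comp]
  have hN : Polynomial.aeval (jordanBlock lam s) (Polynomial.X - Polynomial.C lam)
      = shiftN s := by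
    rw [map_sub, Polynomial.aeval_X, Polynomial.aeval_C, jordan_decomp,
      Algebra.algebraMap_eq_smul_one]
    abel
  conv_lhs => rw [← hcomp]
  rw [Polynomial.aeval_comp, hN, Polynomial.aeval_eq_sum_range]
  set Q := Polynomial.taylor lam q with hQ
  have happ : ∀ i : ℕ, (Q.coeff i • shiftN s ^ i) a b
      = if (b:ℕ) = (a:ℕ) + i then Q.coeff i else 0 := by
    intro i
    rw [Matrix.smul_apply, shiftN_pow, smul_eq_mul, mul_ite, mul_one, mul_zero]
  rw [Matrix.sum_apply]
  simp only [happ]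
  by_cases hab : (a:ℕ) ≤ (b:ℕ)
  · rw [if_pos hab]
    rw [Finset.sum_eq_single ((b:ℕ) - (a:ℕ))]
    · rw [if_pos (by omega)]
    · intro i _ hi
      rw [if_neg (by omega)]
    · intro hnot
      rw [Finset.mem_range, not_lt] at hnot
      rw [if_pos (by omega)]
      apply Polynomial.coeff_eq_zero_of_natDegree_lt
      omega
  · rw [if_neg hab]
    apply Finset.sum_eq_zero
    intro i _
    rw [if_neg (by omega)]

lemma jordan_row_bound (lam : ℝ) (s m : ℕ) (hs : s ≤ m) (q : Polynomial ℝ) (a : Fin s) :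
    ∑ b, |(Polynomial.aeval (jordanBlock lam s) q) a b|
      ≤ ∑ j ∈ Finset.range m, |(Polynomial.taylor lam q).coeff j| := by
  set c : ℕ → ℝ := fun j => |(Polynomial.taylor lam q).coeff j| with hc
  have h1 : ∀ b : Fin s, |(Polynomial.aeval (jordanBlock lam s) q) a b|
      = if (a:ℕ) ≤ (b:ℕ) then c ((b:ℕ) - (a:ℕ)) else 0 := by
    intro b
    rw [aeval_jordan_apply]
    rcases le_or_gt (a:ℕ) (b:ℕ) with h | h
    · rw [if_pos h, if_pos h]
    · rw [if_neg (by omega), if_neg (by omega), abs_zero]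
  simp only [h1]
  rw [Finset.sum_ite, Finset.sum_const_zero, add_zero]
  set F := Finset.univ.filter (fun b : Fin s => (a:ℕ) ≤ (b:ℕ)) with hF
  have hinj : Set.InjOn (fun b : Fin s => (b:ℕ) - (a:ℕ)) F := by
    intro x hx y hy hxy
    simp only [hF, Finset.coe_filter, Set.mem_setOf_eq] at hx hy
    have hxy' : (x:ℕ) - (a:ℕ) = (y:ℕ) - (a:ℕ) := hxy
    have : (x:ℕ) = (y:ℕ) := by omega
    exact Fin.ext this
  rw [← Finset.sum_image hinj]
  apply Finset.sum_le_sum_of_subset_of_nonneg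
  · intro j hj
    rw [Finset.mem_image] at hj
    obtain ⟨b, hb, rfl⟩ := hj
    rw [Finset.mem_range]
    show (b:ℕ) - (a:ℕ) < m
    have := b.isLt
    omega
  · intro j _ _
    exact abs_nonneg _

lemma rowSumNorm_reindex_blockDiag_le {k p : ℕ} {ks : Fin p → ℕ}
    (e : (Σ i : Fin p, Fin (ks i)) ≃ Fin k)
    (N : ∀ i : Fin p, Matrix (Fin (ks i)) (Fin (ks i)) ℝ) {C : ℝ} (hC : 0 ≤ C)
    (h : ∀ (i : Fin p) (a : Fin (ks i)), ∑ b, |N i a b| ≤ C) :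
    rowSumNorm (Matrix.reindex e e (Matrix.blockDiagonal' N)) ≤ C := by
  apply rowSumNorm_le hC
  intro i0
  have hrow : ∀ j : Fin k, (Matrix.reindex e e (Matrix.blockDiagonal' N)) i0 j
      = Matrix.blockDiagonal' N (e.symm i0) (e.symm j) := fun j => rfl
  simp only [hrow]
  rw [Equiv.sum_comp e.symm (fun σ => |Matrix.blockDiagonal' N (e.symm i0) σ|)]
  obtain ⟨i, a⟩ := e.symm i0
  rw [← Finset.univ_sigma_univ, Finset.sum_sigma]
  rw [Finset.sum_eq_single i]
  · have heq : ∑ b, |Matrix.blockDiagonal' N ⟨i, a⟩ ⟨i, b⟩| = ∑ b, |N i a b| := by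
      apply Finset.sum_congr rfl
      intro b _
      rw [Matrix.blockDiagonal'_apply_eq]
    rw [heq]
    exact h i a
  · intro i' _ hi'
    apply Finset.sum_eq_zero
    intro b _
    rw [Matrix.blockDiagonal'_apply_ne _ _ _ (Ne.symm hi'), abs_zero]
  · intro hmem
    exact absurd (Finset.mem_univ _) hmem

noncomputable def conjAlgHom {k : ℕ} (Z : Matrix (Fin k) (Fin k) ℝ)
    (h1 : Z⁻¹ * Z = 1) (h2 : Z * Z⁻¹ = 1) :
    Matrix (Fin k) (Fin k) ℝ →ₐ[ℝ] Matrix (Fin k) (Fin k) ℝ where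
  toFun B := Z⁻¹ * B * Z
  map_one' := show Z⁻¹ * 1 * Z = 1 by rw [mul_one, h1]
  map_mul' B C := show Z⁻¹ * (B * C) * Z = (Z⁻¹ * B * Z) * (Z⁻¹ * C * Z) by
    have h : (Z⁻¹ * B * Z) * (Z⁻¹ * C * Z) = Z⁻¹ * B * (Z * Z⁻¹) * C * Z := by
      noncomm_ring
    rw [h, h2, mul_one]
    noncomm_ring
  map_zero' := show Z⁻¹ * 0 * Z = 0 by rw [mul_zero, zero_mul]
  map_add' B C := show Z⁻¹ * (B + C) * Z = Z⁻¹ * B * Z + Z⁻¹ * C * Z by noncomm_ring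
  commutes' r := show Z⁻¹ * (algebraMap ℝ _ r) * Z = algebraMap ℝ _ r by
    rw [Algebra.algebraMap_eq_smul_one, mul_smul_comm, mul_one, smul_mul_assoc, h1]

noncomputable def bdAlgHom {p : ℕ} (ks : Fin p → ℕ) :
    (∀ i : Fin p, Matrix (Fin (ks i)) (Fin (ks i)) ℝ)
      →ₐ[ℝ] Matrix (Σ i : Fin p, Fin (ks i)) (Σ i : Fin p, Fin (ks i)) ℝ :=
  { Matrix.blockDiagonal'RingHom (fun i => Fin (ks i)) ℝ with
    commutes' := fun r => by
      show Matrix.blockDiagonal' (algebraMap ℝ _ r) = algebraMap ℝ _ r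
      have h : (algebraMap ℝ (∀ i : Fin p, Matrix (Fin (ks i)) (Fin (ks i)) ℝ) r)
          = fun i => r • (1 : Matrix (Fin (ks i)) (Fin (ks i)) ℝ) := by
        funext i
        rw [Pi.algebraMap_apply, Algebra.algebraMap_eq_smul_one]
      rw [h, Algebra.algebraMap_eq_smul_one]
      have : (fun i => r • (1 : Matrix (Fin (ks i)) (Fin (ks i)) ℝ))
          = r • (1 : ∀ i : Fin p, Matrix (Fin (ks i)) (Fin (ks i)) ℝ) := rfl
      rw [this, Matrix.blockDiagonal'_smul, Matrix.blockDiagonal'_one] }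

lemma bdAlgHom_apply {p : ℕ} (ks : Fin p → ℕ)
    (N : ∀ i : Fin p, Matrix (Fin (ks i)) (Fin (ks i)) ℝ) :
    bdAlgHom ks N = Matrix.blockDiagonal' N := rfl

/-- row-sum norm bound `‖T_n(A)‖₁ ≤ 3‖Z⁻¹‖₁‖Z‖₁ n^{2m−2}` for a matrix with
Jordan blocks of size at most `m` and eigenvalues in `[−1,1]`. -/
theorem stmt5 (k p m : ℕ) (ks : Fin p → ℕ) (lam : Fin p → ℝ)
    (hlam : ∀ i, lam i ∈ Set.Icc (-1:ℝ) 1) (hks : ∀ i, ks i ≤ m)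
    (e : (Σ i : Fin p, Fin (ks i)) ≃ Fin k)
    (Z A : Matrix (Fin k) (Fin k) ℝ) (hZ : IsUnit Z.det)
    (hA : A = Z⁻¹ *
      (Matrix.reindex e e (Matrix.blockDiagonal' fun i => jordanBlock (lam i) (ks i))) * Z)
    (n : ℕ) (hn : 1 ≤ n) :
    rowSumNorm (Polynomial.aeval A (chebT n)) ≤
      3 * rowSumNorm Z⁻¹ * rowSumNorm Z * (n : ℝ) ^ (2 * m - 2) := by
  have h1 : Z⁻¹ * Z = 1 := Matrix.nonsing_inv_mul Z hZ
  have h2 : Z * Z⁻¹ = 1 := Matrix.mul_nonsing_inv Z hZ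
  set J : ∀ i : Fin p, Matrix (Fin (ks i)) (Fin (ks i)) ℝ :=
    fun i => jordanBlock (lam i) (ks i) with hJ
  have hconj : Polynomial.aeval A (chebT n)
      = Z⁻¹ * (Polynomial.aeval (Matrix.reindex e e (Matrix.blockDiagonal' J)) (chebT n)) * Z := by
    rw [hA]
    exact Polynomial.aeval_algHom_apply (conjAlgHom Z h1 h2)
      (Matrix.reindex e e (Matrix.blockDiagonal' J)) (chebT n)
  have hPi : ∀ i, (Polynomial.aeval J (chebT n)) i = Polynomial.aeval (J i) (chebT n) := by
    intro i
    exact (Polynomial.aeval_algHom_apply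
      (Pi.evalAlgHom ℝ (fun i => Matrix (Fin (ks i)) (Fin (ks i)) ℝ) i) J (chebT n)).symm
  have hblock : Polynomial.aeval (Matrix.reindex e e (Matrix.blockDiagonal' J)) (chebT n)
      = Matrix.reindex e e
          (Matrix.blockDiagonal' (fun i => Polynomial.aeval (J i) (chebT n))) := by
    calc Polynomial.aeval (Matrix.reindex e e (Matrix.blockDiagonal' J)) (chebT n)
        = Polynomial.aeval (Matrix.reindexAlgEquiv ℝ ℝ e (Matrix.blockDiagonal' J)) (chebT n) := by
          rw [Matrix.reindexAlgEquiv_apply]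
      _ = Matrix.reindexAlgEquiv ℝ ℝ e
            (Polynomial.aeval (Matrix.blockDiagonal' J) (chebT n)) :=
          Polynomial.aeval_algHom_apply _ _ _
      _ = Matrix.reindexAlgEquiv ℝ ℝ e
            (Polynomial.aeval (bdAlgHom ks J) (chebT n)) := by rw [bdAlgHom_apply]
      _ = Matrix.reindexAlgEquiv ℝ ℝ e (bdAlgHom ks (Polynomial.aeval J (chebT n))) := by
          rw [Polynomial.aeval_algHom_apply (bdAlgHom ks) J (chebT n)]
      _ = Matrix.reindex e e
            (Matrix.blockDiagonal' (fun i => Polynomial.aeval (J i) (chebT n))) := by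
          rw [bdAlgHom_apply, Matrix.reindexAlgEquiv_apply]
          congr 1
          rw [show (Polynomial.aeval J (chebT n))
            = (fun i => Polynomial.aeval (J i) (chebT n)) from funext hPi]
  have hC : (0:ℝ) ≤ 3 * (n:ℝ)^(2*m-2) := by positivity
  have hB : rowSumNorm (Matrix.reindex e e
      (Matrix.blockDiagonal' (fun i => Polynomial.aeval (J i) (chebT n))))
        ≤ 3 * (n:ℝ)^(2*m-2) := by
    apply rowSumNorm_reindex_blockDiag_le e _ hC
    intro i a
    calc ∑ b, |(Polynomial.aeval (J i) (chebT n)) a b|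
        ≤ ∑ j ∈ Finset.range m, |(Polynomial.taylor (lam i) (chebT n)).coeff j| :=
          jordan_row_bound (lam i) (ks i) m (hks i) (chebT n) a
      _ ≤ ∑ j ∈ Finset.range m, (n:ℝ)^(2*j) * 2^j / (2*j).factorial := by
          apply Finset.sum_le_sum
          intro j _
          exact coeff_abs_le n j (hlam i)
      _ ≤ 3 * (n:ℝ)^(2*m-2) := sum_bound n m hn
  rw [hconj, hblock]
  set B := Matrix.reindex e e
    (Matrix.blockDiagonal' (fun i => Polynomial.aeval (J i) (chebT n))) with hBdef
  calc rowSumNorm (Z⁻¹ * B * Z) ≤ rowSumNorm (Z⁻¹ * B) * rowSumNorm Z :=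
        rowSumNorm_mul_le _ _
    _ ≤ (rowSumNorm Z⁻¹ * rowSumNorm B) * rowSumNorm Z :=
        mul_le_mul_of_nonneg_right (rowSumNorm_mul_le _ _) (rowSumNorm_nonneg Z)
    _ ≤ (rowSumNorm Z⁻¹ * (3 * (n:ℝ)^(2*m-2))) * rowSumNorm Z := by
        apply mul_le_mul_of_nonneg_right _ (rowSumNorm_nonneg Z)
        exact mul_le_mul_of_nonneg_left hB (rowSumNorm_nonneg _)
    _ = 3 * rowSumNorm Z⁻¹ * rowSumNorm Z * (n:ℝ)^(2*m-2) := by ring
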